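/- For every z ≥ 0, z · I_0(z) ≤ 2(1+z) · I_1(z). -/

import Mathlib

/-- Modified Bessel function `I_0(z) = Σ_{k≥0} (z/2)^{2k} / (k!)²`. -/
noncomputable def besselI0 (z : ℝ) : ℝ :=
  ∑' k : ℕ, (z / 2) ^ (2 * k) / ((k.factorial : ℝ) ^ 2)

/-- Modified Bessel function `I_1(z) = Σ_{k≥0} (z/2)^{2k+1} / (k!·(k+1)!)`. -/
noncomputable def besselI1 (z : ℝ) : ℝ :=
  ∑' k : ℕ, (z / 2) ^ (2 * k + 1) / ((k.factorial : ℝ) * ((k + 1).factorial : ℝ))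

private lemma key_ineq (t y A n : ℝ) (ht : 0 ≤ t) (hy : 0 ≤ y) (hA : 0 < A) (hn : 1 ≤ n) :
    2 * t ^ 2 * y / (A ^ 2 * n ^ 2) ≤
      (2 + 2 * t) * (t ^ 2 * y) / (A ^ 2 * n ^ 2 * (n + 1)) + 2 * t * y / (A ^ 2 * n) := by
  have hn0 : (0:ℝ) < n := by linarith
  have hb : 2 * t ^ 2 ≤ (2 + 2 * t) * t ^ 2 / (n + 1) + 2 * t * n := by
    rw [div_add' _ _ _ (by positivity), le_div_iff₀ (by positivity)]
    nlinarith [sq_nonneg (t - n/2), mul_nonneg ht hn0.le]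
  calc 2 * t ^ 2 * y / (A ^ 2 * n ^ 2)
      = (2 * t ^ 2) * (y / (A ^ 2 * n ^ 2)) := by ring
    _ ≤ ((2 + 2 * t) * t ^ 2 / (n + 1) + 2 * t * n) * (y / (A ^ 2 * n ^ 2)) :=
        mul_le_mul_of_nonneg_right hb (by positivity)
    _ = (2 + 2 * t) * (t ^ 2 * y) / (A ^ 2 * n ^ 2 * (n + 1)) + 2 * t * y / (A ^ 2 * n) := by
        field_simp

/-- For every `z ≥ 0`, `z · I_0(z) ≤ 2(1+z) · I_1(z)`. -/
theorem besselI0_le_besselI1 (z : ℝ) (hz : 0 ≤ z) :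
    z * besselI0 z ≤ 2 * (1 + z) * besselI1 z := by
  set t : ℝ := z / 2 with htdef
  have ht : 0 ≤ t := by positivity
  have hzt : z = 2 * t := by rw [htdef]; ring
  set f1 : ℕ → ℝ := fun k => t ^ (2 * k + 1) / ((k.factorial : ℝ) * ((k + 1).factorial : ℝ))
    with hf1def
  set f0 : ℕ → ℝ := fun k => t ^ (2 * k) / ((k.factorial : ℝ) ^ 2) with hf0def
  set g : ℕ → ℝ := fun k => if k = 0 then 0 else z * f1 (k - 1) with hgdef
  -- summability
  have hbase : Summable (fun k : ℕ => (t ^ 2) ^ k / (k.factorial : ℝ)) :=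
    Real.summable_pow_div_factorial (t ^ 2)
  have hfac1 : ∀ k : ℕ, (1:ℝ) ≤ (k.factorial : ℝ) := fun k => by
    exact_mod_cast Nat.one_le_iff_ne_zero.2 k.factorial_pos.ne'
  have hf1 : Summable f1 := by
    apply Summable.of_nonneg_of_le (fun k => by positivity) _ (hbase.mul_left t)
    intro k
    have h1 : t ^ (2 * k + 1) = t * (t ^ 2) ^ k := by rw [← pow_mul]; ring
    show t ^ (2 * k + 1) / ((k.factorial : ℝ) * ((k + 1).factorial : ℝ)) ≤ _
    rw [h1, mul_div_assoc]
    apply mul_le_mul_of_nonneg_left _ ht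
    apply div_le_div_of_nonneg_left (by positivity) (by positivity)
    calc (k.factorial : ℝ) = (k.factorial : ℝ) * 1 := by ring
      _ ≤ (k.factorial : ℝ) * ((k+1).factorial : ℝ) :=
        mul_le_mul_of_nonneg_left (hfac1 _) (by positivity)
  have hf0 : Summable f0 := by
    apply Summable.of_nonneg_of_le (fun k => by positivity) _ hbase
    intro k
    show t ^ (2 * k) / ((k.factorial : ℝ) ^ 2) ≤ _
    rw [← pow_mul]
    apply div_le_div_of_nonneg_left (by positivity) (by positivity)
    calc (k.factorial : ℝ) = (k.factorial : ℝ) * 1 := by ring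
      _ ≤ (k.factorial : ℝ) * (k.factorial : ℝ) :=
        mul_le_mul_of_nonneg_left (hfac1 _) (by positivity)
      _ = (k.factorial : ℝ) ^ 2 := by ring
  have hgsucc : (fun n : ℕ => g (n + 1)) = fun n : ℕ => z * f1 n := by
    funext n; simp [hgdef]
  have hg : Summable g := by
    rw [← summable_nat_add_iff 1, hgsucc]
    exact hf1.mul_left z
  have hB : Summable (fun k => (2 + z) * f1 k + g k) := (hf1.mul_left (2 + z)).add hg
  -- termwise comparison
  have hterm : ∀ k : ℕ, z * f0 k ≤ (2 + z) * f1 k + g k := by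
    intro k
    cases k with
    | zero =>
      simp only [hf0def, hf1def, hgdef, if_pos rfl]
      norm_num [Nat.factorial]
      nlinarith [sq_nonneg t]
    | succ j =>
      have hgj : g (j + 1) = z * f1 j := by simp [hgdef]
      rw [hgj]
      show z * (t ^ (2 * (j+1)) / (((j+1).factorial : ℝ) ^ 2)) ≤
        (2 + z) * (t ^ (2 * (j+1) + 1) / (((j+1).factorial : ℝ) * ((j+1+1).factorial : ℝ)))
          + z * (t ^ (2 * j + 1) / ((j.factorial : ℝ) * ((j+1).factorial : ℝ)))
      have hA : (0:ℝ) < (j.factorial : ℝ) := by positivity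
      have hy : (0:ℝ) ≤ t ^ (2 * j + 1) := by positivity
      have hn : (1:ℝ) ≤ (j:ℝ) + 1 := by
        have := Nat.cast_nonneg (α := ℝ) j; linarith
      have e1 : (((j+1).factorial : ℝ)) = (j.factorial : ℝ) * ((j:ℝ) + 1) := by
        push_cast [Nat.factorial_succ]; ring
      have e2 : (((j+1+1).factorial : ℝ))
          = (j.factorial : ℝ) * ((j:ℝ) + 1) * (((j:ℝ) + 1) + 1) := by
        push_cast [Nat.factorial_succ]; ring
      have hk := key_ineq t (t ^ (2*j+1)) (j.factorial : ℝ) ((j:ℝ)+1) ht hy hA hn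
      have lhs_eq : z * (t ^ (2 * (j+1)) / (((j+1).factorial : ℝ) ^ 2))
          = 2 * t ^ 2 * t ^ (2*j+1) / ((j.factorial : ℝ) ^ 2 * ((j:ℝ)+1) ^ 2) := by
        rw [e1, hzt]; ring
      have rhs_eq : (2 + z) * (t ^ (2 * (j+1) + 1) /
              (((j+1).factorial : ℝ) * ((j+1+1).factorial : ℝ)))
            + z * (t ^ (2 * j + 1) / ((j.factorial : ℝ) * ((j+1).factorial : ℝ)))
          = (2 + 2*t) * (t ^ 2 * t ^ (2*j+1)) /
              ((j.factorial : ℝ) ^ 2 * ((j:ℝ)+1) ^ 2 * (((j:ℝ)+1) + 1))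
            + 2 * t * t ^ (2*j+1) / ((j.factorial : ℝ) ^ 2 * ((j:ℝ)+1)) := by
        rw [e1, e2, hzt]; ring
      rw [lhs_eq, rhs_eq]
      exact hk
  -- assemble
  have hI0 : besselI0 z = ∑' k, f0 k := rfl
  have hI1 : besselI1 z = ∑' k, f1 k := rfl
  have hmain : ∑' k, z * f0 k ≤ ∑' k, ((2 + z) * f1 k + g k) :=
    Summable.tsum_le_tsum hterm (hf0.mul_left z) hB
  have hsplit : ∑' k, ((2 + z) * f1 k + g k) = (2 + z) * (∑' k, f1 k) + ∑' k, g k := by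
    rw [Summable.tsum_add (hf1.mul_left (2 + z)) hg, tsum_mul_left]
  have hgsum : ∑' k, g k = z * (∑' k, f1 k) := by
    rw [Summable.tsum_eq_zero_add hg]
    simp only [hgdef]
    rw [show (fun n : ℕ => if n + 1 = 0 then (0:ℝ) else z * f1 (n + 1 - 1)) = fun n => z * f1 n by
      funext n; simp]
    rw [tsum_mul_left]
    simp
  calc z * besselI0 z = ∑' k, z * f0 k := by rw [hI0, tsum_mul_left]
    _ ≤ ∑' k, ((2 + z) * f1 k + g k) := hmain
    _ = (2 + z) * (∑' k, f1 k) + z * (∑' k, f1 k) := by rw [hsplit, hgsum]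
    _ = 2 * (1 + z) * besselI1 z := by rw [hI1]; ring
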